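/- Let G be a finite group, H ≤ G, k' a field of characteristic p with a subfield k, and Γ = Gal(k'/k) (k' finite). If P is a p-subgroup with Brauer map Br_P : (k'G)^P → k'C_G(P), and b is a block of k'G with defect group P whose Brauer correspondent in k'N_G(P) is c, then the smallest field k[b] generated over k by the coefficients of b equals the smallest field k[c] generated over k by the coefficients of c. -/

import Mathlib

open scoped Classical

/-- The (coefficient-truncation realization of the) Brauer map with respect to a subset
`C ⊆ G`: it cuts off a group algebra element to its coefficients on `C`.  For a
`p`-subgroup `P`, the Brauer map `Br_P` is truncation to `C_G(P)` (applied to `P`-fixed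
elements). -/
noncomputable def brauerTrunc {k' : Type*} [Field k'] {G : Type*} [Group G]
    (C : Set G) (a : MonoidAlgebra k' G) : MonoidAlgebra k' G :=
  MonoidAlgebra.ofCoeff (Finsupp.filter (· ∈ C) a.coeff)

/-- A block: a primitive idempotent of the center of a ring. -/
def IsBlockIdem {R : Type*} [Ring R] (b : R) : Prop :=
  b ∈ Set.center R ∧ IsIdempotentElem b ∧ b ≠ 0 ∧
    ∀ d e : R, d ∈ Set.center R → e ∈ Set.center R →
      IsIdempotentElem d → IsIdempotentElem e → d * e = 0 → b = d + e →
        d = 0 ∨ e = 0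

/-- `P` is a defect group of `b`: a maximal `p`-subgroup `P` with `Br_P b ≠ 0`. -/
def IsDefectGroup (p : ℕ) {k' : Type*} [Field k'] {G : Type*} [Group G]
    (b : MonoidAlgebra k' G) (P : Subgroup G) : Prop :=
  IsPGroup p P ∧
    brauerTrunc (Subgroup.centralizer (P : Set G) : Set G) b ≠ 0 ∧
    ∀ Q : Subgroup G, IsPGroup p Q →
      brauerTrunc (Subgroup.centralizer (Q : Set G) : Set G) b ≠ 0 → P ≤ Q → Q = P

instance monoidAlgebraCoeFun {k G : Type*} [Semiring k] :
    CoeFun (MonoidAlgebra k G) (fun _ => G → k) :=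
  ⟨fun x => x.coeff⟩

section Helpers

variable {p : ℕ} [Fact p.Prime] {k' : Type*} [Field k'] [CharP k' p]

/-- A sum of a `p`-group-invariant function over an invariant finset without fixed
points vanishes in characteristic `p`. -/
lemma sum_eq_zero_of_pgroup_action {Q : Type*} [Group Q] [Fintype Q] (hQ : IsPGroup p Q)
    {X : Type*} [Fintype X] [MulAction Q X]
    (f : X → k') (hf : ∀ (s : Q) (x : X), f (s • x) = f x)
    (S : Finset X) (hS : ∀ (s : Q) (x : X), x ∈ S → s • x ∈ S)
    (hfix : ∀ x ∈ S, ∃ s : Q, s • x ≠ x) :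
    ∑ x ∈ S, f x = 0 := by
  classical
  induction S using Finset.strongInduction with
  | _ S ih =>
    rcases S.eq_empty_or_nonempty with rfl | ⟨x₀, hx₀⟩
    · simp
    · set O : Finset X := (MulAction.orbit Q x₀).toFinset with hO
      have hx₀O : x₀ ∈ O := by
        simp [hO, MulAction.mem_orbit_self]
      have hOS : O ⊆ S := by
        intro z hz
        rw [hO, Set.mem_toFinset] at hz
        obtain ⟨s, rfl⟩ := hz
        exact hS s x₀ hx₀
      -- card of the orbit is divisible by p
      have hcard : p ∣ O.card := by
        have hdvd : O.card ∣ Fintype.card Q := by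
          have := MulAction.card_orbit_mul_card_stabilizer_eq_card_group Q x₀
          rw [hO, Set.toFinset_card]
          exact Dvd.intro _ this
        obtain ⟨n, hn⟩ := (IsPGroup.iff_card (p := p) (G := Q)).mp hQ
        rw [Nat.card_eq_fintype_card] at hn
        rw [hn] at hdvd
        obtain ⟨m, hm, hOm⟩ := (Nat.dvd_prime_pow (Fact.out : p.Prime)).mp hdvd
        rcases Nat.eq_zero_or_pos m with rfl | hmpos
        · exfalso
          rw [pow_zero] at hOm
          obtain ⟨s, hs⟩ := hfix x₀ (hOS hx₀O)
          have : s • x₀ ∈ O := by simp [hO, MulAction.mem_orbit]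
          have := Finset.card_le_one.mp hOm.le _ this _ hx₀O
          exact hs this
        · rw [hOm]
          exact dvd_pow_self p hmpos.ne'
      have hOsum : ∑ x ∈ O, f x = 0 := by
        have hconst : ∀ x ∈ O, f x = f x₀ := by
          intro z hz
          rw [hO, Set.mem_toFinset] at hz
          obtain ⟨s, rfl⟩ := hz
          exact hf s x₀
        rw [Finset.sum_congr rfl hconst, Finset.sum_const, nsmul_eq_mul]
        have : (O.card : k') = 0 := (CharP.cast_eq_zero_iff k' p _).mpr hcard
        rw [this, zero_mul]
      have hOclosed : ∀ (s : Q) (z : X), z ∈ O → s • z ∈ O := by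
        intro s z hz
        rw [hO, Set.mem_toFinset] at hz ⊢
        obtain ⟨t, rfl⟩ := hz
        exact ⟨s * t, (mul_smul s t x₀).symm ▸ rfl⟩
      have hsub : S \ O ⊂ S := Finset.sdiff_ssubset hOS ⟨x₀, hx₀O⟩
      have hrec : ∑ x ∈ S \ O, f x = 0 := by
        refine ih (S \ O) hsub ?_ ?_
        · intro s x hx
          rw [Finset.mem_sdiff] at hx ⊢
          refine ⟨hS s x hx.1, fun hmem => hx.2 ?_⟩
          have := hOclosed s⁻¹ _ hmem
          rwa [inv_smul_smul] at this
        · intro x hx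
          exact hfix x (Finset.mem_sdiff.mp hx).1
      rw [← Finset.sum_sdiff hOS, hrec, hOsum, add_zero]
end Helpers

section Helpers2
variable {k' : Type*} [Field k'] {G : Type*} [Group G] [Fintype G]

lemma mul_apply_univ (x y : MonoidAlgebra k' G) (g : G) :
    (x * y) g = ∑ u : G, x u * y (u⁻¹ * g) := by
  classical
  rw [MonoidAlgebra.coeff_mul_apply_left, Finsupp.sum_fintype]
  intro i; simp

lemma central_conj {x : MonoidAlgebra k' G} (hx : x ∈ Set.center (MonoidAlgebra k' G))
    (t g : G) : x (t * g * t⁻¹) = x g := by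
  have h := (Semigroup.mem_center_iff.mp hx) (MonoidAlgebra.single t 1)
  have h2 := congrArg (fun z : MonoidAlgebra k' G => z (t * g)) h
  simp only [MonoidAlgebra.coeff_single_mul_apply, MonoidAlgebra.coeff_mul_single_apply,
    one_mul, mul_one] at h2
  rw [inv_mul_cancel_left] at h2
  exact h2.symm

lemma brauerTrunc_apply (C : Set G) (a : MonoidAlgebra k' G) (g : G) :
    brauerTrunc C a g = if g ∈ C then a g else 0 := by
  simp [brauerTrunc, Finsupp.filter_apply]

end Helpers2

section Helpers3
variable {p : ℕ} [Fact p.Prime] {k' : Type*} [Field k'] [CharP k' p]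
variable {G : Type*} [Group G] [Fintype G]

lemma brauerTrunc_mul (P : Subgroup G) (hP : IsPGroup p P)
    (x y : MonoidAlgebra k' G)
    (hx : x ∈ Set.center (MonoidAlgebra k' G)) (hy : y ∈ Set.center (MonoidAlgebra k' G)) :
    brauerTrunc (Subgroup.centralizer (P : Set G) : Set G) (x * y) =
      brauerTrunc (Subgroup.centralizer (P : Set G) : Set G)
        (brauerTrunc (Subgroup.centralizer (P : Set G) : Set G) x *
          brauerTrunc (Subgroup.centralizer (P : Set G) : Set G) y) := by
  classical
  set C : Set G := (Subgroup.centralizer (P : Set G) : Set G) with hC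
  ext g
  rw [brauerTrunc_apply, brauerTrunc_apply]
  by_cases hg : g ∈ C
  · rw [if_pos hg, if_pos hg, mul_apply_univ, mul_apply_univ]
    have hgC : ∀ t ∈ P, t * g = g * t := fun t ht =>
      (Subgroup.mem_centralizer_iff.mp hg t ht)
    -- the two sums agree on the terms with both factors in C
    have hsplit :
        ∑ u : G, x u * y (u⁻¹ * g) =
          (∑ u ∈ Finset.univ.filter (fun u => u ∈ C ∧ u⁻¹ * g ∈ C), x u * y (u⁻¹ * g)) +
          ∑ u ∈ Finset.univ.filter (fun u => ¬(u ∈ C ∧ u⁻¹ * g ∈ C)), x u * y (u⁻¹ * g) :=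
      (Finset.sum_filter_add_sum_filter_not _ _ _).symm
    have hmain :
        ∑ u : G, brauerTrunc C x u * brauerTrunc C y (u⁻¹ * g) =
          ∑ u ∈ Finset.univ.filter (fun u => u ∈ C ∧ u⁻¹ * g ∈ C), x u * y (u⁻¹ * g) := by
      rw [Finset.sum_filter]
      refine Finset.sum_congr rfl fun u _ => ?_
      rw [brauerTrunc_apply, brauerTrunc_apply]
      by_cases h1 : u ∈ C <;> by_cases h2 : u⁻¹ * g ∈ C <;> simp [h1, h2]
    -- the error terms vanish: conjugation action of P
    letI act : MulAction P G :=
      { smul := fun s u => (s : G) * u * (s : G)⁻¹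
        one_smul := fun u => by
          show (1 : G) * u * (1 : G)⁻¹ = u
          simp
        mul_smul := fun s t u => by
          show ((s * t : P) : G) * u * ((s * t : P) : G)⁻¹ =
            (s : G) * ((t : G) * u * (t : G)⁻¹) * (s : G)⁻¹
          push_cast
          group }
    have herr :
        (∑ u ∈ Finset.univ.filter (fun u => ¬(u ∈ C ∧ u⁻¹ * g ∈ C)), x u * y (u⁻¹ * g)) = 0 := by
      refine sum_eq_zero_of_pgroup_action hP (fun u => x u * y (u⁻¹ * g)) ?_ _ ?_ ?_
      · intro s u
        show x ((s : G) * u * (s : G)⁻¹) * y (((s : G) * u * (s : G)⁻¹)⁻¹ * g) =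
          x u * y (u⁻¹ * g)
        have h1 : x ((s : G) * u * (s : G)⁻¹) = x u := central_conj hx _ _
        have harg : ((s : G) * u * (s : G)⁻¹)⁻¹ * g = (s : G) * (u⁻¹ * g) * (s : G)⁻¹ := by
          have hsgg := hgC (s : G) s.2
          have hsg : (s : G)⁻¹ * g = g * (s : G)⁻¹ := by
            rw [inv_mul_eq_iff_eq_mul, ← mul_assoc, hsgg, mul_inv_cancel_right]
          calc ((s : G) * u * (s : G)⁻¹)⁻¹ * g = (s : G) * u⁻¹ * ((s : G)⁻¹ * g) := by group
            _ = (s : G) * u⁻¹ * (g * (s : G)⁻¹) := by rw [hsg]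
            _ = (s : G) * (u⁻¹ * g) * (s : G)⁻¹ := by group
        rw [h1, harg, central_conj hy]
      · intro s u hu
        rw [Finset.mem_filter] at hu ⊢
        refine ⟨Finset.mem_univ _, fun hmem => hu.2 ?_⟩
        have hconjC : ∀ z : G, z ∈ C → ∀ t : G, t ∈ P → t * z * t⁻¹ ∈ C := by
          intro z hz t ht
          rw [hC] at hz ⊢
          rw [SetLike.mem_coe, Subgroup.mem_centralizer_iff] at hz ⊢
          intro s hs
          have h1 : z * (t⁻¹ * s * t) = (t⁻¹ * s * t) * z :=
            (hz _ (by
              refine Subgroup.mul_mem _ (Subgroup.mul_mem _ (Subgroup.inv_mem _ ht) hs) ht)).symm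
          calc s * (t * z * t⁻¹) = t * ((t⁻¹ * s * t) * z) * t⁻¹ := by group
            _ = t * (z * (t⁻¹ * s * t)) * t⁻¹ := by rw [← h1]
            _ = (t * z * t⁻¹) * s := by group
        -- from membership of the conjugate, deduce membership of u and u⁻¹g
        have e1 : (s : G) * u * (s : G)⁻¹ ∈ C := hmem.1
        have e2 : ((s : G) * u * (s : G)⁻¹)⁻¹ * g ∈ C := hmem.2
        constructor
        · have := hconjC _ e1 ((s : G)⁻¹) (Subgroup.inv_mem _ s.2)
          simpa [mul_assoc] using this
        · have harg : ((s : G) * u * (s : G)⁻¹)⁻¹ * g = (s : G) * (u⁻¹ * g) * (s : G)⁻¹ := by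
            have hsgg := hgC (s : G) s.2
            have hsg : (s : G)⁻¹ * g = g * (s : G)⁻¹ := by
              rw [inv_mul_eq_iff_eq_mul, ← mul_assoc, hsgg, mul_inv_cancel_right]
            calc ((s : G) * u * (s : G)⁻¹)⁻¹ * g = (s : G) * u⁻¹ * ((s : G)⁻¹ * g) := by group
              _ = (s : G) * u⁻¹ * (g * (s : G)⁻¹) := by rw [hsg]
              _ = (s : G) * (u⁻¹ * g) * (s : G)⁻¹ := by group
          rw [harg] at e2
          have := hconjC _ e2 ((s : G)⁻¹) (Subgroup.inv_mem _ s.2)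
          simpa [mul_assoc] using this
      · intro u hu
        rw [Finset.mem_filter] at hu
        by_contra hall
        push_neg at hall
        apply hu.2
        have huC : u ∈ C := by
          rw [hC, SetLike.mem_coe, Subgroup.mem_centralizer_iff]
          intro t ht
          have := hall ⟨t, ht⟩
          have h2 : t * u * t⁻¹ = u := this
          calc t * u = (t * u * t⁻¹) * t := by group
            _ = u * t := by rw [h2]
        exact ⟨huC, Subgroup.mul_mem _ (Subgroup.inv_mem _ huC) hg⟩
    rw [hsplit, hmain, herr, add_zero]
  · rw [if_neg hg, if_neg hg]
end Helpers3

section Blocks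
variable {R : Type*} [Ring R]

lemma IsBlockIdem.eq_mul_or_mul_eq_zero {b b' : R} (hb : IsBlockIdem b)
    (hb' : IsBlockIdem b') : b = b * b' ∨ b * b' = 0 := by
  obtain ⟨bc, bi, -, bprim⟩ := hb
  obtain ⟨bc', bi', -, -⟩ := hb'
  have hcomm : ∀ z : R, z * b = b * z := fun z => Semigroup.mem_center_iff.mp bc z
  have hcomm' : ∀ z : R, z * b' = b' * z := fun z => Semigroup.mem_center_iff.mp bc' z
  set e : R := b * b' with he
  have hec : e ∈ Set.center R := Semigroup.mem_center_iff.mpr fun z => by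
    rw [he, ← mul_assoc, hcomm z, mul_assoc, hcomm' z, mul_assoc]
  have hei : IsIdempotentElem e := by
    show e * e = e
    rw [he]
    calc b * b' * (b * b') = b * (b' * b) * b' := by noncomm_ring
      _ = b * (b * b') * b' := by rw [hcomm' b]
      _ = (b * b) * (b' * b') := by noncomm_ring
      _ = b * b' := by rw [bi, bi']
  set d : R := b - e with hd
  have hdc : d ∈ Set.center R := Semigroup.mem_center_iff.mpr fun z => by
    rw [hd, mul_sub, sub_mul, hcomm z, Semigroup.mem_center_iff.mp hec z]
  have hbe : b * e = e := by
    rw [he, ← mul_assoc, bi]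
  have heb : e * b = e := by
    rw [he, mul_assoc, ← hcomm' b, ← mul_assoc, bi]
  have hdi : IsIdempotentElem d := by
    show d * d = d
    rw [hd]
    calc (b - e) * (b - e) = b * b - b * e - (e * b - e * e) := by noncomm_ring
      _ = b - e - (e - e) := by rw [bi, hbe, heb, hei]
      _ = b - e := by rw [sub_self, sub_zero]
  have hde : d * e = 0 := by
    rw [hd, sub_mul, hbe, hei, sub_self]
  have hsum : b = d + e := by rw [hd, sub_add_cancel]
  rcases bprim d e hdc hec hdi hei hde hsum with h | h
  · left
    rw [hsum, h, zero_add]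
  · right
    exact h

lemma IsBlockIdem.eq_or_mul_eq_zero {b b' : R} (hb : IsBlockIdem b)
    (hb' : IsBlockIdem b') : b = b' ∨ b * b' = 0 := by
  rcases hb.eq_mul_or_mul_eq_zero hb' with h1 | h1
  · have hcomm : b * b' = b' * b := by
      rw [Semigroup.mem_center_iff.mp hb.1 b']
    rcases hb'.eq_mul_or_mul_eq_zero hb with h2 | h2
    · left; rw [h1, hcomm]; exact h2.symm
    · right; rw [hcomm, h2]
  · right; exact h1

lemma IsBlockIdem.map {S : Type*} [Ring S] (Φ : R ≃+* S) {b : R} (hb : IsBlockIdem b) :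
    IsBlockIdem (Φ b) := by
  obtain ⟨bc, bi, bne, bprim⟩ := hb
  refine ⟨?_, ?_, ?_, ?_⟩
  · refine Semigroup.mem_center_iff.mpr fun z => ?_
    have := Semigroup.mem_center_iff.mp bc (Φ.symm z)
    have h2 := congrArg Φ this
    simpa using h2
  · show Φ b * Φ b = Φ b
    rw [← map_mul, bi]
  · simpa using bne
  · intro d e hd he hdi hei hde hsum
    have hd0 : Φ.symm d ∈ Set.center R := Semigroup.mem_center_iff.mpr fun z => by
      have := Semigroup.mem_center_iff.mp hd (Φ z)
      have h2 := congrArg Φ.symm this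
      simpa using h2
    have he0 : Φ.symm e ∈ Set.center R := Semigroup.mem_center_iff.mpr fun z => by
      have := Semigroup.mem_center_iff.mp he (Φ z)
      have h2 := congrArg Φ.symm this
      simpa using h2
    have hdi0 : IsIdempotentElem (Φ.symm d) := by
      show _ * _ = _
      rw [← map_mul, hdi]
    have hei0 : IsIdempotentElem (Φ.symm e) := by
      show _ * _ = _
      rw [← map_mul, hei]
    have hde0 : Φ.symm d * Φ.symm e = 0 := by
      rw [← map_mul, hde, map_zero]
    have hsum0 : b = Φ.symm d + Φ.symm e := by
      have := congrArg Φ.symm hsum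
      simpa using this
    rcases bprim _ _ hd0 he0 hdi0 hei0 hde0 hsum0 with h | h
    · left
      have := congrArg Φ h
      simpa using this
    · right
      have := congrArg Φ h
      simpa using this
end Blocks

section Equiv
variable {k' : Type*} [Field k'] {G : Type*} [Group G] [Fintype G]

/-- Coefficient-wise ring automorphism of a group algebra induced by `σ : k' ≃+* k'`. -/
noncomputable def coeffEquiv (σ : k' ≃+* k') :
    MonoidAlgebra k' G ≃+* MonoidAlgebra k' G where
  toFun x := MonoidAlgebra.ofCoeff (Finsupp.mapRange σ σ.map_zero x.coeff)
  invFun x := MonoidAlgebra.ofCoeff (Finsupp.mapRange σ.symm σ.symm.map_zero x.coeff)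
  left_inv x := by ext g; simp
  right_inv x := by ext g; simp
  map_add' x y := by
    ext g
    show σ ((x + y) g) = σ (x g) + σ (y g)
    rw [MonoidAlgebra.coeff_add, Finsupp.add_apply]
    rw [map_add]
  map_mul' x y := by
    ext g
    rw [MonoidAlgebra.coeff_ofCoeff, Finsupp.mapRange_apply, mul_apply_univ, mul_apply_univ, map_sum]
    refine Finset.sum_congr rfl fun u _ => ?_
    rw [map_mul, MonoidAlgebra.coeff_ofCoeff, MonoidAlgebra.coeff_ofCoeff, Finsupp.mapRange_apply,
      Finsupp.mapRange_apply]

@[simp] lemma coeffEquiv_apply (σ : k' ≃+* k') (x : MonoidAlgebra k' G) (g : G) :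
    coeffEquiv σ x g = σ (x g) := rfl

lemma brauerTrunc_coeffEquiv (σ : k' ≃+* k') (C : Set G) (x : MonoidAlgebra k' G) :
    brauerTrunc C (coeffEquiv σ x) = coeffEquiv σ (brauerTrunc C x) := by
  ext g
  rw [brauerTrunc_apply, coeffEquiv_apply, coeffEquiv_apply, brauerTrunc_apply,
    apply_ite σ, map_zero]
end Equiv

section Unique
variable {p : ℕ} [Fact p.Prime] {k' : Type*} [Field k'] [CharP k' p]
variable {G : Type*} [Group G] [Fintype G]

/-- Uniqueness of a block with given nonzero Brauer image. -/
lemma block_eq_of_brauerTrunc_eq (P : Subgroup G) (hP : IsPGroup p P)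
    {b b' : MonoidAlgebra k' G} (hb : IsBlockIdem b) (hb' : IsBlockIdem b')
    (h : brauerTrunc (Subgroup.centralizer (P : Set G) : Set G) b =
      brauerTrunc (Subgroup.centralizer (P : Set G) : Set G) b')
    (hne : brauerTrunc (Subgroup.centralizer (P : Set G) : Set G) b ≠ 0) : b = b' := by
  rcases hb.eq_or_mul_eq_zero hb' with h1 | h1
  · exact h1
  · exfalso
    apply hne
    have e1 := brauerTrunc_mul (p := p) P hP b b hb.1 hb.1
    have e2 := brauerTrunc_mul (p := p) P hP b b' hb.1 hb'.1
    rw [hb.2.1] at e1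
    calc brauerTrunc (Subgroup.centralizer (P : Set G) : Set G) b
        = brauerTrunc _ (brauerTrunc _ b * brauerTrunc _ b) := e1
      _ = brauerTrunc _ (brauerTrunc _ b * brauerTrunc _ b') := by rw [h]
      _ = brauerTrunc _ (b * b') := e2.symm
      _ = 0 := by rw [h1]; ext g; rw [brauerTrunc_apply]; simp
end Unique

section Main

/-- Repackage a subfield containing `k` as an intermediate field of `k'/k`. -/
noncomputable def subfieldToIF {k' : Type*} [Field k'] (k : Subfield k') (S : Subfield k')
    (hkS : ∀ x : ↥k, (x : k') ∈ S) : IntermediateField ↥k k' where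
  carrier := S
  mul_mem' := fun ha hb => S.mul_mem ha hb
  one_mem' := S.one_mem
  add_mem' := fun ha hb => S.add_mem ha hb
  zero_mem' := S.zero_mem
  algebraMap_mem' := fun r => hkS r
  inv_mem' := fun x hx => S.inv_mem hx

lemma subfieldToIF_mem {k' : Type*} [Field k'] (k : Subfield k') (S : Subfield k')
    (hkS : ∀ x : ↥k, (x : k') ∈ S) (x : k') : x ∈ subfieldToIF k S hkS ↔ x ∈ S := Iff.rfl

end Main

/-- Proposition 2.2: if `b` is a block of `k'G` with defect group `P` and `c` is its
Brauer correspondent in `k'N_G(P)` (the unique block of `k'N_G(P)` with defect group `P`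
such that `Br_P b = Br_P c`), then the subfield of `k'` generated over a subfield `k`
by the coefficients of `b` equals the one generated by the coefficients of `c`. -/
theorem field_of_block_eq_field_of_brauer_correspondent
    (p : ℕ) [Fact p.Prime]
    (k' : Type*) [Field k'] [CharP k' p] [Finite k'] (k : Subfield k')
    (G : Type*) [Group G] [Finite G]
    (P : Subgroup G)
    (b : MonoidAlgebra k' G) (hb : IsBlockIdem b) (hbP : IsDefectGroup p b P)
    (c : MonoidAlgebra k' (Subgroup.normalizer (P : Set G))) (hc : IsBlockIdem c)
    (hcP : IsDefectGroup p c (P.subgroupOf (Subgroup.normalizer (P : Set G))))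
    (hcorr : ∀ g : G,
      (brauerTrunc (Subgroup.centralizer (P : Set G) : Set G) b).coeff g =
        if h : g ∈ (Subgroup.normalizer (P : Set G)) then
          (brauerTrunc
            (Subgroup.centralizer ((P.subgroupOf (Subgroup.normalizer (P : Set G)) : Subgroup (Subgroup.normalizer (P : Set G))) :
              Set (Subgroup.normalizer (P : Set G))) : Set (Subgroup.normalizer (P : Set G))) c).coeff ⟨g, h⟩
        else 0) :
    Subfield.closure ((k : Set k') ∪ Set.range fun g : G => b.coeff g) =
      Subfield.closure ((k : Set k') ∪ Set.range fun h : (Subgroup.normalizer (P : Set G)) => c.coeff h) := by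
  haveI : Fintype G := Fintype.ofFinite G
  haveI : Fintype ↥(Subgroup.normalizer (P : Set G)) := Fintype.ofFinite _
  -- the key Galois-stability equivalence
  have key : ∀ σ : k' ≃+* k',
      (∀ g : G, σ (b g) = b g) ↔ (∀ h : ↥(Subgroup.normalizer (P : Set G)), σ (c h) = c h) := by
    intro σ
    constructor
    · intro hσ
      have hfixBr : ∀ h : ↥(Subgroup.normalizer (P : Set G)),
          σ (brauerTrunc
              (Subgroup.centralizer ((P.subgroupOf (Subgroup.normalizer (P : Set G)) : Subgroup (Subgroup.normalizer (P : Set G))) :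
                Set (Subgroup.normalizer (P : Set G))) : Set (Subgroup.normalizer (P : Set G))) c h) =
            brauerTrunc
              (Subgroup.centralizer ((P.subgroupOf (Subgroup.normalizer (P : Set G)) : Subgroup (Subgroup.normalizer (P : Set G))) :
                Set (Subgroup.normalizer (P : Set G))) : Set (Subgroup.normalizer (P : Set G))) c h := by
        intro h
        have h1 := hcorr (h : G)
        rw [dif_pos h.2, Subtype.coe_eta] at h1
        rw [← h1, brauerTrunc_apply]
        split_ifs with hmem
        · exact hσ _
        · exact map_zero σ
      have hBreq :
          brauerTrunc
              (Subgroup.centralizer ((P.subgroupOf (Subgroup.normalizer (P : Set G)) : Subgroup (Subgroup.normalizer (P : Set G))) :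
                Set (Subgroup.normalizer (P : Set G))) : Set (Subgroup.normalizer (P : Set G))) (coeffEquiv σ c) =
            brauerTrunc
              (Subgroup.centralizer ((P.subgroupOf (Subgroup.normalizer (P : Set G)) : Subgroup (Subgroup.normalizer (P : Set G))) :
                Set (Subgroup.normalizer (P : Set G))) : Set (Subgroup.normalizer (P : Set G))) c := by
        rw [brauerTrunc_coeffEquiv]
        ext h
        rw [coeffEquiv_apply]
        exact hfixBr h
      have heq := block_eq_of_brauerTrunc_eq (p := p) (P.subgroupOf (Subgroup.normalizer (P : Set G))) hcP.1
        (hc.map (coeffEquiv σ)) hc hBreq (by rw [hBreq]; exact hcP.2.1)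
      intro h
      have := congrArg (fun z : MonoidAlgebra k' ↥(Subgroup.normalizer (P : Set G)) => z h) heq
      simpa using this
    · intro hσ
      have hfixb : ∀ g : G,
          σ (brauerTrunc (Subgroup.centralizer (P : Set G) : Set G) b g) =
            brauerTrunc (Subgroup.centralizer (P : Set G) : Set G) b g := by
        intro g
        rw [hcorr g]
        by_cases hg : g ∈ (Subgroup.normalizer (P : Set G))
        · rw [dif_pos hg, brauerTrunc_apply]
          split_ifs with hmem
          · exact hσ _
          · exact map_zero σ
        · rw [dif_neg hg]
          exact map_zero σ
      have hBreq :
          brauerTrunc (Subgroup.centralizer (P : Set G) : Set G) (coeffEquiv σ b) =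
            brauerTrunc (Subgroup.centralizer (P : Set G) : Set G) b := by
        rw [brauerTrunc_coeffEquiv]
        ext g
        rw [coeffEquiv_apply]
        exact hfixb g
      have heq := block_eq_of_brauerTrunc_eq (p := p) P hbP.1
        (hb.map (coeffEquiv σ)) hb hBreq (by rw [hBreq]; exact hbP.2.1)
      intro g
      have := congrArg (fun z : MonoidAlgebra k' G => z g) heq
      simpa using this
  -- now the Galois correspondence over k
  set Sb := Subfield.closure ((k : Set k') ∪ Set.range fun g : G => b g) with hSb
  set Sc := Subfield.closure ((k : Set k') ∪ Set.range fun h : ↥(Subgroup.normalizer (P : Set G)) => c h) with hSc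
  have hkSb : ∀ x : ↥k, (x : k') ∈ Sb := fun x => Subfield.subset_closure (Or.inl x.2)
  have hkSc : ∀ x : ↥k, (x : k') ∈ Sc := fun x => Subfield.subset_closure (Or.inl x.2)
  set Eb := subfieldToIF k Sb hkSb with hEb
  set Ec := subfieldToIF k Sc hkSc with hEc
  have hfs : Eb.fixingSubgroup = Ec.fixingSubgroup := by
    ext σ
    rw [IntermediateField.mem_fixingSubgroup_iff, IntermediateField.mem_fixingSubgroup_iff]
    have hk : ∀ x ∈ (k : Set k'), σ x = x := fun x hx => σ.commutes ⟨x, hx⟩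
    constructor
    · intro hfix x hx
      have hbfix : ∀ g : G, σ.toRingEquiv (b g) = b g := fun g =>
        hfix _ (Subfield.subset_closure (Or.inr ⟨g, rfl⟩))
      have hcfix := (key σ.toRingEquiv).mp hbfix
      have hle : Sc ≤ RingHom.eqLocusField (σ : k' →+* k') (RingHom.id k') := by
        refine Subfield.closure_le.mpr ?_
        rintro z (hz | ⟨h0, rfl⟩)
        · exact hk z hz
        · exact hcfix h0
      exact hle hx
    · intro hfix x hx
      have hcfix : ∀ h : ↥(Subgroup.normalizer (P : Set G)), σ.toRingEquiv (c h) = c h := fun h =>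
        hfix _ (Subfield.subset_closure (Or.inr ⟨h, rfl⟩))
      have hbfix := (key σ.toRingEquiv).mpr hcfix
      have hle : Sb ≤ RingHom.eqLocusField (σ : k' →+* k') (RingHom.id k') := by
        refine Subfield.closure_le.mpr ?_
        rintro z (hz | ⟨g0, rfl⟩)
        · exact hk z hz
        · exact hbfix g0
      exact hle hx
  have hEq : Eb = Ec := by
    have h1 := IsGalois.fixedField_fixingSubgroup Eb
    have h2 := IsGalois.fixedField_fixingSubgroup Ec
    rw [← h1, ← h2, hfs]
  refine Subfield.ext fun x => ?_
  have : x ∈ Eb ↔ x ∈ Ec := by rw [hEq]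
  exact this
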